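/- Assume the symmetrized Schlesinger equations L_m B_n = Σ_{k=1}^{n-1}[B_k, B_{m+n-k}] + n B_{m+n} hold with B_0 = 0, where each L_m is a derivation commuting with trace. Define Ĥ_n := -(1/4) Σ_{k=0}^n tr(B_k B_{n-k}). Then L_m Ĥ_n = -(1/2) Σ_{k=1}^{n-1} k · tr(B_{m+k} B_{n-k}) for all m ≥ -1, n ≥ 0. -/

import Mathlib

open Matrix
open Finset

private lemma cyc3 {M : ℕ} (X Y Z : Matrix (Fin M) (Fin M) ℂ) :
    (X * Y * Z).trace = (Z * X * Y).trace := by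
  rw [Matrix.trace_mul_comm, mul_assoc]

/-- totally antisymmetric double sum vanishes -/
private lemma antisym_sum_zero (N : ℤ) (ψ : ℤ → ℤ → ℂ)
    (h : ∀ j c, ψ c j = -ψ j c) :
    ∑ c ∈ Icc 0 N, ∑ j ∈ Icc 0 N, ψ j c = 0 := by
  have h2 : ∑ c ∈ Icc 0 N, ∑ j ∈ Icc 0 N, ψ j c
      = -∑ c ∈ Icc 0 N, ∑ j ∈ Icc 0 N, ψ j c := by
    conv_lhs => rw [Finset.sum_comm]
    rw [← Finset.sum_neg_distrib]
    refine Finset.sum_congr rfl fun c _ => ?_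
    rw [← Finset.sum_neg_distrib]
    exact Finset.sum_congr rfl fun j _ => h j c
  linear_combination h2 / 2

private lemma comm_sum_zero {M : ℕ} (A : ℤ → Matrix (Fin M) (Fin M) ℂ) (hA0 : A 0 = 0)
    (m n : ℤ) :
    ∑ k ∈ Icc 1 n, ∑ j ∈ Icc 1 (k - 1),
      ((A j * A (m + k - j) - A (m + k - j) * A j) * A (n - k)).trace = 0 := by
  set φ : ℤ → ℤ → ℂ := fun j c =>
    ((A j * A (m + n - c - j) - A (m + n - c - j) * A j) * A c).trace with hφ
  have hanti : ∀ j c, φ (c) (j) = -φ j c := by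
    intro j c
    simp only [hφ]
    have e1 : m + n - j - c = m + n - c - j := by ring
    rw [e1]
    set b := m + n - c - j
    rw [sub_mul, sub_mul, Matrix.trace_sub, Matrix.trace_sub]
    rw [cyc3 (A c) (A b) (A j), cyc3 (A b) (A c) (A j)]
    rw [cyc3 (A j) (A c) (A b)]
    ring
  -- step 1 : reindex k ↦ n - k
  have s1 : ∑ k ∈ Icc 1 n, ∑ j ∈ Icc 1 (k - 1),
      ((A j * A (m + k - j) - A (m + k - j) * A j) * A (n - k)).trace
      = ∑ c ∈ Icc 0 (n - 1), ∑ j ∈ Icc 1 (n - 1 - c), φ j c := by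
    apply Finset.sum_nbij' (i := fun k => n - k) (j := fun c => n - c)
    · intro a ha; simp only [mem_Icc] at *; omega
    · intro a ha; simp only [mem_Icc] at *; omega
    · intro a ha; omega
    · intro a ha; omega
    · intro k hk
      apply Finset.sum_congr (by congr 1; omega)
      intro j hj
      simp only [hφ]
      congr 2 <;> ring_nf
  rw [s1]
  -- step 2 : extend inner sum to start at 0
  have s2 : ∀ c ∈ Icc 0 (n-1), ∑ j ∈ Icc 1 (n - 1 - c), φ j c
      = ∑ j ∈ Icc 0 (n - 1 - c), φ j c := by
    intro c _
    apply Finset.sum_subset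
    · intro j hj; simp only [mem_Icc] at *; omega
    · intro j hj hj'
      simp only [mem_Icc] at hj hj'
      have : j = 0 := by omega
      simp [hφ, this, hA0]
  rw [Finset.sum_congr rfl s2]
  -- step 3 : extend to rectangle with ite
  have s3 : ∀ c ∈ Icc 0 (n-1), ∑ j ∈ Icc 0 (n - 1 - c), φ j c
      = ∑ j ∈ Icc 0 (n - 1), (if j + c ≤ n - 1 then φ j c else 0) := by
    intro c hc
    simp only [mem_Icc] at hc
    rw [Finset.sum_ite, Finset.sum_const_zero, add_zero]
    apply Finset.sum_congr
    · ext j; simp only [mem_filter, mem_Icc]; omega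
    · intros; rfl
  rw [Finset.sum_congr rfl s3]
  apply antisym_sum_zero
  intro j c
  by_cases h : j + c ≤ n - 1
  · rw [if_pos h, if_pos (by omega), hanti]
  · rw [if_neg h, if_neg (by omega), neg_zero]

private lemma pointwise {M : ℕ} (A D : ℤ → Matrix (Fin M) (Fin M) ℂ) (m n : ℤ)
    (hA0 : A 0 = 0) (hD0 : D 0 = 0)
    (hD : ∀ k : ℤ, 1 ≤ k → D k = (∑ j ∈ Icc 1 (k - 1),
        (A j * A (m + k - j) - A (m + k - j) * A j)) + (k : ℂ) • A (m + k)) :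
    -(1/4 : ℂ) * ∑ k ∈ Icc 0 n, ((D k * A (n - k)).trace + (A k * D (n - k)).trace)
      = -(1/2 : ℂ) * ∑ k ∈ Icc 1 (n - 1), (k : ℂ) * (A (m + k) * A (n - k)).trace := by
  -- symmetrize
  have sym : ∑ k ∈ Icc 0 n, (A k * D (n - k)).trace
      = ∑ k ∈ Icc 0 n, (D k * A (n - k)).trace := by
    apply Finset.sum_nbij' (i := fun k => n - k) (j := fun k => n - k)
    · intro a ha; simp only [mem_Icc] at *; omega
    · intro a ha; simp only [mem_Icc] at *; omega
    · intro a _; omega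
    · intro a _; omega
    · intro k hk
      simp only [mem_Icc] at hk
      rw [show n - (n - k) = k from by omega, Matrix.trace_mul_comm]
  rw [Finset.sum_add_distrib, sym, ← two_mul]
  -- drop k = 0
  have drop0 : ∑ k ∈ Icc 0 n, (D k * A (n - k)).trace
      = ∑ k ∈ Icc 1 n, (D k * A (n - k)).trace := by
    symm; apply Finset.sum_subset
    · intro j hj; simp only [mem_Icc] at *; omega
    · intro j hj hj'
      simp only [mem_Icc] at hj hj'
      have : j = 0 := by omega
      simp [this, hD0]
  rw [drop0]
  -- substitute hD
  have expand : ∑ k ∈ Icc 1 n, (D k * A (n - k)).trace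
      = (∑ k ∈ Icc 1 n, ∑ j ∈ Icc 1 (k - 1),
          ((A j * A (m + k - j) - A (m + k - j) * A j) * A (n - k)).trace)
        + ∑ k ∈ Icc 1 n, (k : ℂ) * (A (m + k) * A (n - k)).trace := by
    rw [← Finset.sum_add_distrib]
    refine Finset.sum_congr rfl fun k hk => ?_
    simp only [mem_Icc] at hk
    rw [hD k hk.1, add_mul, Matrix.trace_add, Finset.sum_mul, Matrix.trace_sum,
      smul_mul_assoc, Matrix.trace_smul, smul_eq_mul]
  rw [expand, comm_sum_zero A hA0 m n, zero_add]
  -- drop k = n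
  have dropn : ∑ k ∈ Icc 1 n, (k : ℂ) * (A (m + k) * A (n - k)).trace
      = ∑ k ∈ Icc 1 (n - 1), (k : ℂ) * (A (m + k) * A (n - k)).trace := by
    symm; apply Finset.sum_subset
    · intro j hj; simp only [mem_Icc] at *; omega
    · intro j hj hj'
      simp only [mem_Icc] at hj hj'
      have : j = n := by omega
      simp [this, hA0]
  rw [dropn]; ring

theorem L_on_modified_hamiltonians {X : Type*} (M : ℕ)
    (B : ℤ → X → Matrix (Fin M) (Fin M) ℂ) (hB0 : B 0 = 0)
    (Lm : ℤ → (X → Matrix (Fin M) (Fin M) ℂ) →ₗ[ℂ] (X → Matrix (Fin M) (Fin M) ℂ))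
    (Ls : ℤ → (X → ℂ) →ₗ[ℂ] (X → ℂ))
    (hLeib : ∀ m : ℤ, -1 ≤ m → ∀ F G : X → Matrix (Fin M) (Fin M) ℂ,
      Lm m (F * G) = Lm m F * G + F * Lm m G)
    (hTr : ∀ m : ℤ, -1 ≤ m → ∀ F : X → Matrix (Fin M) (Fin M) ℂ,
      Ls m (fun x => (F x).trace) = fun x => ((Lm m F) x).trace)
    (hSch : ∀ m n : ℤ, -1 ≤ m → 1 ≤ n →
      Lm m (B n) = (∑ k ∈ Finset.Icc 1 (n - 1),
          (B k * B (m + n - k) - B (m + n - k) * B k)) + (n : ℂ) • B (m + n))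
    (H : ℤ → X → ℂ)
    (hH : ∀ n, H n = fun x => -(1/4 : ℂ) * ∑ k ∈ Finset.Icc 0 n, (B k x * B (n - k) x).trace) :
    ∀ m n : ℤ, -1 ≤ m → 0 ≤ n →
      Ls m (H n) =
        fun x => -(1/2 : ℂ) * ∑ k ∈ Finset.Icc 1 (n - 1),
          (k : ℂ) * (B (m + k) x * B (n - k) x).trace := by
  intro m n hm hn
  have hHn : H n = (-(1/4 : ℂ)) • ∑ k ∈ Icc 0 n, (fun x => ((B k * B (n - k)) x).trace) := by
    funext x
    simp [hH, Finset.sum_apply, Pi.mul_apply, smul_eq_mul]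
  have step : Ls m (H n)
      = (-(1/4 : ℂ)) • ∑ k ∈ Icc 0 n,
          (fun x => ((Lm m (B k) * B (n - k) + B k * Lm m (B (n - k))) x).trace) := by
    rw [hHn, LinearMap.map_smul, map_sum]
    congr 1
    refine Finset.sum_congr rfl fun k _ => ?_
    rw [hTr m hm, hLeib m hm]
  rw [step]
  funext x
  simp only [Pi.smul_apply, Finset.sum_apply, Pi.add_apply, Pi.mul_apply, smul_eq_mul,
    Matrix.trace_add]
  have := pointwise (fun k => B k x) (fun k => Lm m (B k) x) m n
    (by simp [hB0]) (by show Lm m (B 0) x = 0; rw [hB0, map_zero]; rfl) ?_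
  · rw [neg_mul] at this ⊢
    convert this using 2
  · intro k hk
    show Lm m (B k) x = _
    rw [hSch m k hm hk]
    simp [Finset.sum_apply, Pi.add_apply, Pi.smul_apply, Pi.sub_apply, Pi.mul_apply]
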